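/- Let s ∈ {0,1} and κ ∈ ℂ. Let σ : ℝ → ℂ be twice differentiable and y : ℝ → ℂ be three times differentiable. Define the quasi-derivatives y⁽⁰⁾ = y, y⁽¹⁾ = y' + (s+κ)σy, y⁽²⁾ = (y⁽¹⁾)' + (3κ²/2 + s²/2 + 2κs)σ²y − 2κσy⁽¹⁾, y⁽³⁾ = (y⁽²⁾)' − κ(κ²−s²)σ³y + (3κ²/2 + s²/2 − 2κs)σ²y⁽¹⁾ − (s−κ)σy⁽²⁾. Then for every x ∈ ℝ, y⁽³⁾(x) = y'''(x) + 2s·σ'(x)·y'(x) + (s+κ)·σ''(x)·y(x); equivalently, y⁽³⁾ = y''' + s(σ'y)' + sσ'y' + κσ''y. -/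
import Mathlib


/-- The first quasi-derivative: y⁽¹⁾ = y' + (s+κ)σy. -/
noncomputable def qd1 (s κ : ℂ) (σ y : ℝ → ℂ) : ℝ → ℂ :=
  fun x => deriv y x + (s + κ) * σ x * y x

/-- The second quasi-derivative:
y⁽²⁾ = (y⁽¹⁾)' + (3κ²/2 + s²/2 + 2κs)σ²y − 2κσy⁽¹⁾. -/
noncomputable def qd2 (s κ : ℂ) (σ y : ℝ → ℂ) : ℝ → ℂ :=
  fun x => deriv (qd1 s κ σ y) x
    + (3 * κ ^ 2 / 2 + s ^ 2 / 2 + 2 * κ * s) * σ x ^ 2 * y x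
    - 2 * κ * σ x * qd1 s κ σ y x

/-- The third quasi-derivative:
y⁽³⁾ = (y⁽²⁾)' − κ(κ²−s²)σ³y + (3κ²/2 + s²/2 − 2κs)σ²y⁽¹⁾ − (s−κ)σy⁽²⁾. -/
noncomputable def qd3 (s κ : ℂ) (σ y : ℝ → ℂ) : ℝ → ℂ :=
  fun x => deriv (qd2 s κ σ y) x
    - κ * (κ ^ 2 - s ^ 2) * σ x ^ 3 * y x
    + (3 * κ ^ 2 / 2 + s ^ 2 / 2 - 2 * κ * s) * σ x ^ 2 * qd1 s κ σ y x
    - (s - κ) * σ x * qd2 s κ σ y x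

/-- For s ∈ {0,1}, κ ∈ ℂ, σ twice differentiable and y three times differentiable,
the third quasi-derivative reproduces the differential expression
ℓ_{σ,s,κ}(y) = y''' + s(σ'y)' + sσ'y' + κσ''y = y''' + 2sσ'y' + (s+κ)σ''y. -/
theorem quasi_deriv_third_order (s : ℂ) (hs : s = 0 ∨ s = 1) (κ : ℂ) (σ y : ℝ → ℂ)
    (hσ1 : Differentiable ℝ σ) (hσ2 : Differentiable ℝ (deriv σ))
    (hy1 : Differentiable ℝ y) (hy2 : Differentiable ℝ (deriv y))
    (hy3 : Differentiable ℝ (deriv (deriv y))) :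
    ∀ x : ℝ, qd3 s κ σ y x =
      deriv (deriv (deriv y)) x + 2 * s * deriv σ x * deriv y x
        + (s + κ) * deriv (deriv σ) x * y x := by
  have hd1 : ∀ t : ℝ, HasDerivAt (qd1 s κ σ y)
      (deriv (deriv y) t + ((s + κ) * deriv σ t * y t + (s + κ) * σ t * deriv y t)) t := by
    intro t
    have h := ((hy2 t).hasDerivAt).add
      ((((hσ1 t).hasDerivAt).const_mul (s + κ)).mul ((hy1 t).hasDerivAt))
    exact h
  have e2 : qd2 s κ σ y = fun t =>
      deriv (deriv y) t + (s + κ) * (deriv σ t * y t) + (s - κ) * (σ t * deriv y t)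
        + ((s ^ 2 - κ ^ 2) / 2) * (σ t * σ t * y t) := by
    funext t
    simp only [qd2, qd1]
    rw [(hd1 t).deriv]
    ring
  have hd2 : ∀ t : ℝ, HasDerivAt (qd2 s κ σ y)
      (deriv (deriv (deriv y)) t
        + (s + κ) * (deriv (deriv σ) t * y t + deriv σ t * deriv y t)
        + (s - κ) * (deriv σ t * deriv y t + σ t * deriv (deriv y) t)
        + ((s ^ 2 - κ ^ 2) / 2) * ((deriv σ t * σ t + σ t * deriv σ t) * y t + σ t * σ t * deriv y t)) t := by
    intro t
    rw [e2]
    have h := ((((hy3 t).hasDerivAt).add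
        (((hσ2 t).hasDerivAt.mul ((hy1 t).hasDerivAt)).const_mul (s + κ))).add
        (((hσ1 t).hasDerivAt.mul ((hy2 t).hasDerivAt)).const_mul (s - κ))).add
        ((((hσ1 t).hasDerivAt.mul ((hσ1 t).hasDerivAt)).mul ((hy1 t).hasDerivAt)).const_mul ((s ^ 2 - κ ^ 2) / 2))
    exact h
  intro x
  simp only [qd3]
  rw [(hd2 x).deriv]
  simp only [e2, qd1]
  rcases hs with rfl | rfl <;> ring
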